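/- For a ring A the following are equivalent: (i) A has the left lifting property with respect to all surjective ring homomorphisms with nilpotent kernel, i.e. for every surjective ring homomorphism p : X → Y whose kernel is a nilpotent two-sided ideal and every ring homomorphism u : A → Y there exists a ring homomorphism v : A → X with p ∘ v = u; (ii) every surjective ring homomorphism q : B → A whose kernel is a nilpotent two-sided ideal splits, i.e. admits a ring homomorphism section s : A → B with q ∘ s = id_A. (Instance of Lemma 1.9(3): an object is cofibrant iff every deformation onto it is split, in the category of associative rings with shrinking functor s(A,N) = N² and fibrations the surjections.) -/

import Mathlib

set_option maxHeartbeats 1000000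
set_option synthInstance.maxHeartbeats 400000


universe u

/-- The `m`-th power of a subset `U` of a ring `B`: the additive subgroup generated by
all products of `m` elements of `U`. -/
def setPow {B : Type*} [Ring B] (U : Set B) (m : ℕ) : AddSubgroup B :=
  AddSubgroup.closure {x | ∃ l : List B, l.length = m ∧ (∀ y ∈ l, y ∈ U) ∧ x = l.prod}

lemma setPow_map {B C : Type*} [Ring B] [Ring C] (f : B →+* C) (U : Set B) (m : ℕ)
    {x : B} (hx : x ∈ setPow U m) : f x ∈ setPow (f '' U) m := by
  induction hx using AddSubgroup.closure_induction with
  | mem y hy =>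
    obtain ⟨l, hl, hmem, rfl⟩ := hy
    refine AddSubgroup.subset_closure ⟨l.map f, by simp [hl], ?_, ?_⟩
    · intro y hy
      obtain ⟨z, hz, rfl⟩ := List.mem_map.mp hy
      exact ⟨z, hmem z hz, rfl⟩
    · exact map_list_prod f l
  | zero => simpa using (setPow (f '' U) m).zero_mem
  | add a b _ _ ha hb => simpa [map_add] using (setPow (f '' U) m).add_mem ha hb
  | neg a _ ha => simpa [map_neg] using (setPow (f '' U) m).neg_mem ha

lemma setPow_mono {B : Type*} [Ring B] {U V : Set B} (h : U ⊆ V) (m : ℕ) :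
    setPow U m ≤ setPow V m := by
  apply AddSubgroup.closure_mono
  rintro x ⟨l, hl, hmem, rfl⟩
  exact ⟨l, hl, fun y hy => h (hmem y hy), rfl⟩

lemma setPow_zero_set {B : Type*} [Ring B] {U : Set B} (hU : U ⊆ {0}) {m : ℕ} (hm : 1 ≤ m)
    {x : B} (hx : x ∈ setPow U m) : x = 0 := by
  have : setPow U m ≤ ⊥ := by
    apply (AddSubgroup.closure_le _).mpr
    rintro x ⟨l, hl, hmem, rfl⟩
    cases l with
    | nil => simp at hl; omega
    | cons a t =>
      have ha : a = 0 := hU (hmem a (by simp))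
      simp [ha]
  simpa using this hx

/-- A ring `A` has the left lifting property with respect to all surjective
ring homomorphisms with nilpotent kernel if and only if every surjective ring homomorphism
onto `A` with nilpotent kernel splits. -/
theorem llp_iff_splittings {A : Type u} [Ring A] :
    (∀ (X Y : Type u) [Ring X] [Ring Y] (p : X →+* Y), Function.Surjective p →
        (∃ m, 1 ≤ m ∧ ∀ x ∈ setPow {x : X | p x = 0} m, x = 0) →
        ∀ u : A →+* Y, ∃ v : A →+* X, p.comp v = u) ↔
      (∀ (B : Type u) [Ring B] (q : B →+* A), Function.Surjective q →
        (∃ m, 1 ≤ m ∧ ∀ x ∈ setPow {b : B | q b = 0} m, x = 0) →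
        ∃ s : A →+* B, q.comp s = RingHom.id A) := by
  constructor
  · intro h B _ q hq hnil
    exact h B A q hq hnil (RingHom.id A)
  · intro h X Y _ _ p hp hnil u
    -- pullback subring of A × X
    let S : Subring (A × X) :=
      { carrier := {z | u z.1 = p z.2}
        one_mem' := by simp
        mul_mem' := by
          intro a b ha hb
          simp only [Set.mem_setOf_eq] at *
          simp [ha, hb]
        zero_mem' := by simp
        add_mem' := by
          intro a b ha hb
          simp only [Set.mem_setOf_eq] at *
          simp [ha, hb]
        neg_mem' := by
          intro a ha
          simp only [Set.mem_setOf_eq] at *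
          simp [ha] }
    let qA : S →+* A := (RingHom.fst A X).comp S.subtype
    let qX : S →+* X := (RingHom.snd A X).comp S.subtype
    have hqA_surj : Function.Surjective qA := by
      intro a
      obtain ⟨x, hx⟩ := hp (u a)
      exact ⟨⟨(a, x), hx.symm⟩, rfl⟩
    obtain ⟨m, hm, hmz⟩ := hnil
    have hker : ∀ x ∈ setPow {b : S | qA b = 0} m, x = 0 := by
      intro x hx
      have h1 : (x : A × X).1 = 0 := by
        have := setPow_map qA _ m hx
        refine setPow_zero_set ?_ hm this
        rintro y ⟨b, hb, rfl⟩
        exact hb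
      have h2 : (x : A × X).2 = 0 := by
        have := setPow_map qX _ m hx
        have h' : qX '' {b : S | qA b = 0} ⊆ {x : X | p x = 0} := by
          rintro y ⟨b, hb, rfl⟩
          have hb' : u (b : A × X).1 = p (b : A × X).2 := b.2
          have : (b : A × X).1 = 0 := hb
          show p (b : A × X).2 = 0
          rw [← hb', this, map_zero]
        exact hmz _ (setPow_mono h' m this)
      exact Subtype.ext (Prod.ext h1 h2)
    obtain ⟨s, hs⟩ := h S qA hqA_surj ⟨m, hm, hker⟩
    refine ⟨qX.comp s, ?_⟩
    ext a
    have hsa : qA (s a) = a := RingHom.congr_fun hs a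
    have hmem : u ((s a : A × X).1) = p ((s a : A × X).2) := (s a).2
    simp only [RingHom.comp_apply]
    rw [show qX (s a) = (s a : A × X).2 from rfl, ← hmem,
      show ((s a : A × X).1) = qA (s a) from rfl, hsa]
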